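/- Let A be a real d×d matrix whose eigenvalues all have strictly negative real part, and suppose u is a polynomial satisfying ⟨Ax, ∇u(x)⟩ + Tr(Q∇²u(x)) = γ u(x) for some γ ∈ ℂ and positive semidefinite Q. If u ≠ 0 then Re(γ) ≤ 0. -/

import Mathlib

open Finset MvPolynomial

namespace Stmt7Aux

lemma my_pderiv_comm {σ R : Type*} [CommRing R] (i j : σ) (p : MvPolynomial σ R) :
    pderiv i (pderiv j p) = pderiv j (pderiv i p) := by
  classical
  rcases eq_or_ne i j with rfl | hij
  · rfl
  · induction p using MvPolynomial.induction_on' with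
    | monomial s a =>
      simp only [pderiv_monomial]
      rw [tsub_right_comm]
      congr 1
      have h1 : ((s - Finsupp.single j 1 : _ →₀ ℕ)) i = s i := by
        simp [Finsupp.tsub_apply, Finsupp.single_eq_of_ne' hij.symm]
      have h2 : ((s - Finsupp.single i 1 : _ →₀ ℕ)) j = s j := by
        simp [Finsupp.tsub_apply, Finsupp.single_eq_of_ne' hij]
      rw [h1, h2]; ring
    | add p q hp hq => simp [hp, hq]

lemma my_totalDegree_pderiv_le {σ R : Type*} [CommRing R] (i : σ) (p : MvPolynomial σ R) :
    (pderiv i p).totalDegree ≤ p.totalDegree - 1 := by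
  classical
  conv_lhs => rw [p.as_sum, map_sum]
  refine (totalDegree_finset_sum _ _).trans (Finset.sup_le fun s hs => ?_)
  rw [pderiv_monomial]
  rcases eq_or_ne (coeff s p * s i) 0 with h | h
  · simp [h]
  · rw [totalDegree_monomial _ h]
    have hsi : 1 ≤ s i := by
      rcases Nat.eq_zero_or_pos (s i) with h0 | h0
      · exact absurd (by simp [h0]) h
      · exact h0
    have hle : Finsupp.single i 1 ≤ s := by rwa [Finsupp.single_le_iff]
    have hsum : (s - Finsupp.single i 1).sum (fun _ e => e) + 1 = s.sum (fun _ e => e) := by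
      have hsub := tsub_add_cancel_of_le hle
      calc (s - Finsupp.single i 1).sum (fun _ e => e) + 1
          = (s - Finsupp.single i 1).sum (fun _ e => e)
            + (Finsupp.single i 1).sum (fun _ e => e) := by
            simp [Finsupp.sum_single_index]
        _ = ((s - Finsupp.single i 1) + Finsupp.single i 1).sum (fun _ e => e) := by
            rw [Finsupp.sum_add_index' (fun _ => rfl) (fun _ _ _ => rfl)]
        _ = s.sum (fun _ e => e) := by rw [hsub]
    have := le_totalDegree hs
    omega

lemma my_pderiv_eq_zero {σ R : Type*} [CommRing R] (i : σ) (p : MvPolynomial σ R)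
    (h : p.totalDegree = 0) : pderiv i p = 0 := by
  classical
  conv_lhs => rw [p.as_sum, map_sum]
  apply Finset.sum_eq_zero; intro s hs
  rw [pderiv_monomial, (totalDegree_eq_zero_iff _ p).mp h s hs i, Nat.cast_zero, mul_zero,
    monomial_zero]

variable {d : ℕ}

noncomputable def Lop (A Q : Matrix (Fin d) (Fin d) ℝ) :
    MvPolynomial (Fin d) ℂ →ₗ[ℂ] MvPolynomial (Fin d) ℂ :=
  (∑ i, LinearMap.comp (LinearMap.mulLeft ℂ (∑ j, C ((A i j : ℝ) : ℂ) * X j))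
      (pderiv i).toLinearMap)
  + ∑ i, ∑ j, LinearMap.comp (LinearMap.mulLeft ℂ (C ((Q i j : ℝ) : ℂ)))
      (LinearMap.comp (pderiv i).toLinearMap (pderiv j).toLinearMap)

lemma Lop_apply (A Q : Matrix (Fin d) (Fin d) ℝ) (u : MvPolynomial (Fin d) ℂ) :
    Lop A Q u = (∑ i, (∑ j, C ((A i j : ℝ) : ℂ) * X j) * pderiv i u)
      + (∑ i, ∑ j, C ((Q i j : ℝ) : ℂ) * pderiv i (pderiv j u)) := by
  simp [Lop, LinearMap.mulLeft_apply]

lemma pderiv_Lop (A Q : Matrix (Fin d) (Fin d) ℝ) (k : Fin d) (u : MvPolynomial (Fin d) ℂ) :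
    pderiv k (Lop A Q u)
      = Lop A Q (pderiv k u) + ∑ i, C ((A i k : ℝ) : ℂ) * pderiv i u := by
  rw [Lop_apply, Lop_apply]
  rw [map_add, map_sum, map_sum]
  have h1 : ∀ i : Fin d, pderiv k ((∑ j, C ((A i j : ℝ) : ℂ) * X j) * pderiv i u)
      = C ((A i k : ℝ) : ℂ) * pderiv i u
        + (∑ j, C ((A i j : ℝ) : ℂ) * X j) * pderiv i (pderiv k u) := by
    intro i
    rw [pderiv_mul]
    refine congrArg₂ (· + ·) ?_ ?_
    · refine congrArg (· * pderiv i u) ?_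
      rw [map_sum]
      rw [Finset.sum_eq_single k]
      · simp
      · intro j _ hj; simp [pderiv_C_mul, pderiv_X_of_ne hj]
      · simp
    · rw [my_pderiv_comm]
  have h2 : ∀ i j : Fin d, pderiv k (C ((Q i j : ℝ) : ℂ) * pderiv i (pderiv j u))
      = C ((Q i j : ℝ) : ℂ) * pderiv i (pderiv j (pderiv k u)) := by
    intro i j
    rw [pderiv_C_mul, my_pderiv_comm k i, my_pderiv_comm k j]
  rw [Finset.sum_congr rfl fun i _ => h1 i]
  rw [Finset.sum_add_distrib]
  have h2' : ∀ i : Fin d, (pderiv k) (∑ j, C ((Q i j : ℝ) : ℂ) * pderiv i (pderiv j u))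
      = ∑ j, C ((Q i j : ℝ) : ℂ) * pderiv i (pderiv j (pderiv k u)) := by
    intro i; rw [map_sum]; exact Finset.sum_congr rfl fun j _ => h2 i j
  simp only [h2']
  ring

noncomputable def Tmap (u : MvPolynomial (Fin d) ℂ) :
    (Fin d → ℂ) →ₗ[ℂ] MvPolynomial (Fin d) ℂ where
  toFun c := ∑ k, C (c k) * pderiv k u
  map_add' a b := by simp [add_mul, Finset.sum_add_distrib]
  map_smul' r a := by simp [Finset.mul_sum, smul_eq_C_mul, mul_assoc]

lemma Tmap_apply (u : MvPolynomial (Fin d) ℂ) (c : Fin d → ℂ) :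
    Tmap u c = ∑ k, C (c k) * pderiv k u := rfl

lemma Tmap_single (u : MvPolynomial (Fin d) ℂ) (k : Fin d) :
    Tmap u (Pi.single k 1) = pderiv k u := by
  classical
  rw [Tmap_apply, Finset.sum_eq_single k] <;> simp [Pi.single_apply]
  intro j hj; simp [Pi.single_apply, hj]

lemma Lop_Tmap (A Q : Matrix (Fin d) (Fin d) ℝ) (u : MvPolynomial (Fin d) ℂ) (γ : ℂ)
    (heq : Lop A Q u = C γ * u) (c : Fin d → ℂ) :
    Lop A Q (Tmap u c)
      = C γ * Tmap u c - Tmap u ((A.map (fun a => (a : ℂ))).mulVec c) := by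
  have hk : ∀ k, Lop A Q (pderiv k u)
      = C γ * pderiv k u - ∑ i, C ((A i k : ℝ) : ℂ) * pderiv i u := by
    intro k
    have h := congrArg (pderiv k) heq
    rw [pderiv_Lop, pderiv_C_mul] at h
    exact eq_sub_of_add_eq h
  have hlin : Lop A Q (Tmap u c) = ∑ k, C (c k) * Lop A Q (pderiv k u) := by
    rw [Tmap_apply, map_sum]
    exact Finset.sum_congr rfl fun k _ => by
      rw [← smul_eq_C_mul, map_smul, smul_eq_C_mul]
  rw [hlin]
  simp only [hk, mul_sub]
  rw [Finset.sum_sub_distrib]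
  congr 1
  · rw [Tmap_apply, Finset.mul_sum]
    exact Finset.sum_congr rfl fun k _ => by ring
  · rw [Tmap_apply]
    simp only [Finset.mul_sum]
    rw [Finset.sum_comm]
    refine Finset.sum_congr rfl fun i _ => ?_
    have : ((A.map (fun a => (a : ℂ))).mulVec c) i = ∑ x, ((A i x : ℝ) : ℂ) * c x := by
      simp [Matrix.mulVec, dotProduct, Matrix.map_apply]
    rw [this, map_sum, Finset.sum_mul]
    exact Finset.sum_congr rfl fun x _ => by rw [map_mul]; ring

lemma exists_eigen (A : Matrix (Fin d) (Fin d) ℝ) (p : Submodule ℂ (Fin d → ℂ)) (hp : p ≠ ⊤)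
    (hinv : ∀ c ∈ p, (A.map (fun a => (a : ℂ))).mulVec c ∈ p) :
    ∃ μ ∈ spectrum ℂ (A.map (fun a => (a : ℂ))), ∃ c, c ∉ p ∧
      (A.map (fun a => (a : ℂ))).mulVec c - μ • c ∈ p := by
  classical
  set Ac := A.map (fun a => (a : ℂ)) with hAc
  set f : Module.End ℂ (Fin d → ℂ) := Matrix.toLinAlgEquiv' Ac with hf
  have hfapp : ∀ c, f c = Ac.mulVec c := fun c => rfl
  have hcomap : p ≤ p.comap f := fun c hc => by
    simpa [Submodule.mem_comap, hfapp] using hinv c hc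
  haveI : Nontrivial ((Fin d → ℂ) ⧸ p) :=
    Submodule.Quotient.nontrivial_iff.mpr hp
  set fbar : Module.End ℂ ((Fin d → ℂ) ⧸ p) := p.mapQ p f hcomap with hfbar
  obtain ⟨μ, hμ⟩ := Module.End.exists_eigenvalue fbar
  obtain ⟨v, hv⟩ := hμ.exists_hasEigenvector
  obtain ⟨c, rfl⟩ := p.mkQ_surjective v
  have hc : c ∉ p := fun h => hv.right (by rwa [Submodule.mkQ_apply, Submodule.Quotient.mk_eq_zero])
  have hmem : f c - μ • c ∈ p := by
    have h1 : fbar (p.mkQ c) = μ • p.mkQ c := hv.apply_eq_smul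
    rw [hfbar, Submodule.mkQ_apply, Submodule.mapQ_apply] at h1
    have : p.mkQ (f c - μ • c) = 0 := by
      rw [map_sub, map_smul, Submodule.mkQ_apply, Submodule.mkQ_apply, h1, sub_self]
    rwa [Submodule.mkQ_apply, Submodule.Quotient.mk_eq_zero] at this
  refine ⟨μ, ?_, c, hc, by rwa [hfapp] at hmem⟩
  rw [← AlgEquiv.spectrum_eq (Matrix.toLinAlgEquiv' : Matrix (Fin d) (Fin d) ℂ ≃ₐ[ℂ] _) Ac, ← hf]
  by_contra hμs
  have hU : IsUnit (algebraMap ℂ (Module.End ℂ (Fin d → ℂ)) μ - f) := spectrum.notMem_iff.mp hμs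
  set g := algebraMap ℂ (Module.End ℂ (Fin d → ℂ)) μ - f with hg
  have hgapp : ∀ x, g x = μ • x - f x := fun x => by
    simp [hg, LinearMap.sub_apply, Module.algebraMap_end_apply]
  have hgsurj : Function.Surjective g := by
    obtain ⟨gu, hgu⟩ := hU
    intro y
    exact ⟨(↑gu⁻¹ : Module.End ℂ (Fin d → ℂ)) y, by
      rw [← hgu, ← Module.End.mul_apply, Units.mul_inv, Module.End.one_apply]⟩
  have hgp : p ≤ p.comap g := fun x hx => by
    simp only [Submodule.mem_comap, hgapp]
    exact Submodule.sub_mem p (Submodule.smul_mem p μ hx) ((hcomap hx : _))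
  set gbar : Module.End ℂ ((Fin d → ℂ) ⧸ p) := p.mapQ p g hgp with hgbar
  have hgbar_surj : Function.Surjective gbar := by
    intro y
    obtain ⟨y', rfl⟩ := p.mkQ_surjective y
    obtain ⟨x, hx⟩ := hgsurj y'
    exact ⟨p.mkQ x, by
      rw [hgbar, Submodule.mkQ_apply, Submodule.mapQ_apply, hx, Submodule.mkQ_apply]⟩
  have hgbar_inj : Function.Injective gbar :=
    (LinearMap.injective_iff_surjective).mpr hgbar_surj
  have hzero : gbar (p.mkQ c) = 0 := by
    rw [hgbar, Submodule.mkQ_apply, Submodule.mapQ_apply, hgapp]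
    have h2 : μ • c - f c = -(f c - μ • c) := by abel
    rw [h2, Submodule.Quotient.mk_neg, (Submodule.Quotient.mk_eq_zero p).mpr hmem, neg_zero]
  have : p.mkQ c = 0 := by apply hgbar_inj; rw [hzero, map_zero]
  exact hc (by rwa [Submodule.mkQ_apply, Submodule.Quotient.mk_eq_zero] at this)

lemma key (A : Matrix (Fin d) (Fin d) ℝ)
    (hA : ∀ μ ∈ spectrum ℂ (A.map (fun a => (a : ℂ))), μ.re < 0)
    (Q : Matrix (Fin d) (Fin d) ℝ) :
    ∀ n : ℕ, ∀ u : MvPolynomial (Fin d) ℂ, ∀ γ : ℂ, u.totalDegree ≤ n →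
      Lop A Q u = C γ * u → u ≠ 0 → γ.re ≤ 0 := by
  have hzero_case : ∀ (u : MvPolynomial (Fin d) ℂ) (γ : ℂ), (∀ k, pderiv k u = 0) →
      Lop A Q u = C γ * u → u ≠ 0 → γ.re ≤ 0 := by
    intro u γ hz heq hu
    rw [Lop_apply] at heq
    simp only [hz, mul_zero, map_zero, Finset.sum_const_zero, add_zero] at heq
    rcases mul_eq_zero.mp heq.symm with h | h
    · rw [show (0:ℝ) = (0:ℂ).re from rfl]
      rw [show γ = 0 from by rwa [MvPolynomial.C_eq_zero] at h]
    · exact absurd h hu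
  intro n
  induction n with
  | zero =>
    intro u γ hdeg heq hu
    exact hzero_case u γ
      (fun k => my_pderiv_eq_zero k u (Nat.le_zero.mp hdeg)) heq hu
  | succ n ih =>
    intro u γ hdeg heq hu
    by_cases hz : ∀ k, pderiv k u = 0
    · exact hzero_case u γ hz heq hu
    · push_neg at hz
      obtain ⟨k0, hk0⟩ := hz
      set p := LinearMap.ker (Tmap u) with hp
      have hpne : p ≠ ⊤ := by
        intro h
        apply hk0
        have : Pi.single k0 1 ∈ p := h ▸ Submodule.mem_top
        rw [hp, LinearMap.mem_ker, Tmap_single] at this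
        exact this
      have hinv : ∀ c ∈ p, (A.map (fun a => (a : ℂ))).mulVec c ∈ p := by
        intro c hc
        have hc' : Tmap u c = 0 := LinearMap.mem_ker.mp hc
        have h := Lop_Tmap A Q u γ heq c
        rw [hc', mul_zero, map_zero, zero_sub, eq_comm, neg_eq_zero] at h
        exact LinearMap.mem_ker.mpr h
      obtain ⟨μ, hμspec, c, hcp, hcmem⟩ := exists_eigen A p hpne hinv
      set w := Tmap u c with hw
      have hw0 : w ≠ 0 := fun h => hcp (LinearMap.mem_ker.mpr h)
      have hLw : Lop A Q w = C (γ - μ) * w := by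
        have h1 := Lop_Tmap A Q u γ heq c
        have h2 : Tmap u ((A.map (fun a => (a : ℂ))).mulVec c) = C μ * w := by
          have h3 : (A.map (fun a => (a : ℂ))).mulVec c
              = ((A.map (fun a => (a : ℂ))).mulVec c - μ • c) + μ • c := by abel
          rw [h3, map_add, map_smul, LinearMap.mem_ker.mp hcmem, zero_add, smul_eq_C_mul]
        rw [← hw] at h1
        rw [h1, h2, map_sub, sub_mul]
      have hdegw : w.totalDegree ≤ n := by
        rw [hw, Tmap_apply]
        refine (totalDegree_finset_sum _ _).trans (Finset.sup_le fun k _ => ?_)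
        calc (C (c k) * pderiv k u).totalDegree
            ≤ (C (c k)).totalDegree + (pderiv k u).totalDegree := totalDegree_mul _ _
          _ = (pderiv k u).totalDegree := by rw [totalDegree_C, zero_add]
          _ ≤ u.totalDegree - 1 := my_totalDegree_pderiv_le _ _
          _ ≤ n := by omega
      have hre := ih w (γ - μ) hdegw hLw hw0
      have hμre := hA μ hμspec
      rw [Complex.sub_re] at hre
      linarith

end Stmt7Aux

open Stmt7Aux in
/-- Let `A` be a real `d×d` matrix whose (complex) eigenvalues all have strictly negative
real part, `Q` positive semidefinite, and `u` a polynomial (over `ℂ`) satisfying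
`⟨Ax, ∇u⟩ + Tr(Q ∇²u) = γ u` as a polynomial identity. If `u ≠ 0` then `Re γ ≤ 0`. -/
theorem stmt7 {d : ℕ} (A : Matrix (Fin d) (Fin d) ℝ)
    (hA : ∀ μ ∈ spectrum ℂ (A.map (fun a => (a : ℂ))), μ.re < 0)
    (Q : Matrix (Fin d) (Fin d) ℝ) (hQ : Q.PosSemidef)
    (u : MvPolynomial (Fin d) ℂ) (γ : ℂ)
    (heq : (∑ i, (∑ j, C ((A i j : ℝ) : ℂ) * X j) * pderiv i u)
        + (∑ i, ∑ j, C ((Q i j : ℝ) : ℂ) * pderiv i (pderiv j u))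
      = C γ * u)
    (hu : u ≠ 0) : γ.re ≤ 0 := by
  rw [← Lop_apply A Q u] at heq
  exact key A hA Q u.totalDegree u γ le_rfl heq hu
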